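/- For all integers n ≥ 2 and 0 ≤ m ≤ n/2 − 1, g_n(m,m+2) = Σ_{j=0}^{m} C(n−2j−2, m−j); that is, the smallest k for which there exists a cutset in 2^{[n]} consisting of exactly k subsets of each of the sizes m, m+1 and m+2 (and no subsets of any other size) equals Σ_{j=0}^{m} C(n−2j−2, m−j). -/

import Mathlib

attribute [-instance] instDecidableEqFin

open Finset

/-- A maximal chain in the Boolean lattice of subsets of `[n] = {1, …, n}`:
`∅ = c 0 ⊂ c 1 ⊂ ⋯ ⊂ c n = [n]` with `|c i| = i`. -/
def IsMaxChainIn (n : ℕ) (c : ℕ → Finset ℕ) : Prop :=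
  (∀ i ≤ n, (c i).card = i) ∧ (∀ i < n, c i ⊆ c (i + 1)) ∧ c n = Finset.Icc 1 n

/-- A cutset in `2^{[n]}`: a collection of subsets of `[n]` meeting every maximal chain. -/
def IsCutsetIn (n : ℕ) (C : Finset (Finset ℕ)) : Prop :=
  (∀ A ∈ C, A ⊆ Finset.Icc 1 n) ∧
    ∀ c : ℕ → Finset ℕ, IsMaxChainIn n c → ∃ i ≤ n, c i ∈ C

/-- `gcut n m l`: the smallest `k` such that there is a cutset in `2^{[n]}` containing
exactly `k` subsets of size `i` for each `m ≤ i ≤ l` and no subsets of any other size. -/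
noncomputable def gcut (n m l : ℕ) : ℕ :=
  sInf {k : ℕ | ∃ C : Finset (Finset ℕ), IsCutsetIn n C ∧
    (∀ A ∈ C, m ≤ A.card ∧ A.card ≤ l) ∧
    ∀ i : ℕ, m ≤ i → i ≤ l → (C.filter fun A => A.card = i).card = k}

namespace GcutAux


lemma chain_mono {n : ℕ} {c : ℕ → Finset ℕ} (hc : IsMaxChainIn n c) :
    ∀ i j, i ≤ j → j ≤ n → c i ⊆ c j := by
  intro i j hij hjn
  induction j with
  | zero => exact (Nat.le_zero.1 hij) ▸ Subset.rfl
  | succ k ih =>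
    rcases Nat.eq_or_lt_of_le hij with rfl | h
    · exact Subset.rfl
    · exact (ih (by omega) (by omega)).trans (hc.2.1 k (by omega))

lemma chain_subset_top {n : ℕ} {c : ℕ → Finset ℕ} (hc : IsMaxChainIn n c) {i : ℕ} (hi : i ≤ n) :
    c i ⊆ Finset.Icc 1 n := hc.2.2 ▸ chain_mono hc i n hi le_rfl

lemma exists_maxChain (n : ℕ) : ∃ c, IsMaxChainIn n c := by
  refine ⟨fun i => Finset.Icc 1 i, ⟨fun i _ => by simp, fun i _ => ?_, rfl⟩⟩
  exact Finset.Icc_subset_Icc le_rfl (by omega)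

/-- A maximal chain through a flag `A ⊆ B ⊆ D` of sizes `m, m+1, m+2`. -/
lemma exists_maxChain_through (n m : ℕ) (A B D : Finset ℕ) (hAB : A ⊆ B) (hBD : B ⊆ D)
    (hD : D ⊆ Finset.Icc 1 n) (hA : A.card = m) (hB : B.card = m + 1) (hDc : D.card = m + 2) :
    ∃ c, IsMaxChainIn n c ∧ c m = A ∧ c (m + 1) = B ∧ c (m + 2) = D := by
  classical
  set r : ℕ → ℕ → Prop := (· ≤ ·)
  let sA := A.sort r
  let sBA := (B \ A).sort r
  let sDB := (D \ B).sort r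
  let sR := ((Finset.Icc 1 n) \ D).sort r
  let L : List ℕ := sA ++ (sBA ++ (sDB ++ sR))
  have lenA : sA.length = m := by simp [sA, hA]
  have lenBA : sBA.length = 1 := by simp [sBA, card_sdiff_of_subset hAB, hA, hB]
  have lenDB : sDB.length = 1 := by
    simp [sDB, card_sdiff_of_subset hBD, hB, hDc]
  have lenR : sR.length = n - (m + 2) := by
    simp [sR, card_sdiff_of_subset hD, hDc, Nat.card_Icc]
  have hmn : m + 2 ≤ n := by
    have := card_le_card hD
    simpa [hDc, Nat.card_Icc] using this
  have lenL : L.length = n := by simp [L, lenA, lenBA, lenDB, lenR]; omega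
  have hnd : L.Nodup := by
    have dA : ∀ x ∈ sA, x ∈ A := by intro x hx; simpa [sA] using hx
    have dBA : ∀ x ∈ sBA, x ∈ B \ A := by intro x hx; simpa [sBA] using hx
    have dDB : ∀ x ∈ sDB, x ∈ D \ B := by intro x hx; simpa [sDB] using hx
    have dR : ∀ x ∈ sR, x ∈ (Finset.Icc 1 n) \ D := by intro x hx; simpa [sR] using hx
    refine List.Nodup.append (Finset.sort_nodup _ _) ?_ ?_
    · refine List.Nodup.append (Finset.sort_nodup _ _) ?_ ?_
      · refine List.Nodup.append (Finset.sort_nodup _ _) (Finset.sort_nodup _ _) ?_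
        intro x hx hx'
        have := dDB x hx; have := dR x hx'
        simp_all [Finset.mem_sdiff]
      · intro x hx hx'
        have h1 := dBA x hx
        rcases List.mem_append.1 hx' with h | h
        · have := dDB x h; simp_all [Finset.mem_sdiff]
        · have := dR x h; have := hBD (Finset.mem_sdiff.1 h1).1; simp_all [Finset.mem_sdiff]
    · intro x hx hx'
      have h1 := dA x hx
      rcases List.mem_append.1 hx' with h | h
      · have := dBA x h; simp_all [Finset.mem_sdiff]
      rcases List.mem_append.1 h with h | h
      · have := dDB x h; have := hAB h1; simp_all [Finset.mem_sdiff]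
      · have := dR x h; have hxD := hBD (hAB h1); simp_all [Finset.mem_sdiff]
  let c : ℕ → Finset ℕ := fun i => (L.take i).toFinset
  have hcard : ∀ i ≤ n, (c i).card = i := by
    intro i hi
    show ((L.take i).toFinset).card = i
    rw [List.card_toFinset, (hnd.sublist (List.take_sublist _ _)).dedup, List.length_take, lenL]
    omega
  have hcm : c m = A := by
    show (L.take m).toFinset = A
    have : L.take m = sA := by
      rw [List.take_append_of_le_length (by omega), ← lenA, List.take_length]
    rw [this]; simp [sA]
  have hcm1 : c (m + 1) = B := by
    have hL : L = (sA ++ sBA) ++ (sDB ++ sR) := by simp [L, List.append_assoc]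
    show (L.take (m+1)).toFinset = B
    have : L.take (m + 1) = sA ++ sBA := by
      rw [hL, List.take_append_of_le_length (by simp [lenA, lenBA])]
      have : (sA ++ sBA).length = m + 1 := by simp [lenA, lenBA]
      rw [← this, List.take_length]
    rw [this]; simp only [List.toFinset_append]
    simp [sA, sBA, Finset.union_sdiff_of_subset hAB]
  have hcm2 : c (m + 2) = D := by
    have hL : L = ((sA ++ sBA) ++ sDB) ++ sR := by simp [L, List.append_assoc]
    show (L.take (m+2)).toFinset = D
    have : L.take (m + 2) = (sA ++ sBA) ++ sDB := by
      rw [hL, List.take_append_of_le_length (by simp [lenA, lenBA, lenDB])]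
      have : ((sA ++ sBA) ++ sDB).length = m + 2 := by simp [lenA, lenBA, lenDB]
      rw [← this, List.take_length]
    rw [this]; simp only [List.toFinset_append]
    have h1 : A ∪ (B \ A) = B := Finset.union_sdiff_of_subset hAB
    simp only [sA, sBA, sDB, Finset.sort_toFinset]
    rw [h1, Finset.union_sdiff_of_subset hBD]
  have hcn : c n = Finset.Icc 1 n := by
    show (L.take n).toFinset = Finset.Icc 1 n
    have : L.take n = L := by rw [← lenL, List.take_length]
    rw [this]; simp only [L, List.toFinset_append]
    simp only [sA, sBA, sDB, sR, Finset.sort_toFinset]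
    rw [← Finset.union_assoc, ← Finset.union_assoc]
    rw [Finset.union_sdiff_of_subset hAB, Finset.union_sdiff_of_subset hBD,
      Finset.union_sdiff_of_subset hD]
  refine ⟨c, ⟨hcard, fun i _ => ?_, hcn⟩, hcm, hcm1, hcm2⟩
  show (L.take i).toFinset ⊆ (L.take (i+1)).toFinset
  intro x hx
  simp only [List.mem_toFinset] at hx ⊢
  have : L.take i = (L.take (i+1)).take i := by rw [List.take_take]; simp
  rw [this] at hx
  exact List.take_subset _ _ hx



/-- From a 3-level cutset, the covering structure. -/
lemma cutset_structure {n m : ℕ} {C : Finset (Finset ℕ)} (hm2 : m + 2 ≤ n)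
    (hC : IsCutsetIn n C) (hcards : ∀ A ∈ C, m ≤ A.card ∧ A.card ≤ m + 2) :
    ∀ B : Finset ℕ, B ⊆ Finset.Icc 1 n → B.card = m + 1 → B ∉ C →
      (∀ A ⊆ B, A.card = m → A ∈ C) ∨
      (∀ D, B ⊆ D → D ⊆ Finset.Icc 1 n → D.card = m + 2 → D ∈ C) := by
  intro B hBsub hBcard hBC
  by_contra hcon
  push_neg at hcon
  obtain ⟨⟨A, hAB, hAcard, hAC⟩, D, hBD, hDsub, hDcard, hDC⟩ := hcon
  obtain ⟨c, hc, hcm, hcm1, hcm2⟩ :=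
    exists_maxChain_through n m A B D hAB hBD hDsub hAcard hBcard hDcard
  obtain ⟨i, hin, hiC⟩ := hC.2 c hc
  have hci : (c i).card = i := hc.1 i hin
  have := hcards _ hiC
  rw [hci] at this
  have : i = m ∨ i = m + 1 ∨ i = m + 2 := by omega
  rcases this with rfl | rfl | rfl
  · exact hAC (hcm ▸ hiC)
  · exact hBC (hcm1 ▸ hiC)
  · exact hDC (hcm2 ▸ hiC)

/-- Conversely, the covering structure yields a cutset. -/
lemma cutset_of_structure {n m : ℕ} {C : Finset (Finset ℕ)} (hm2 : m + 2 ≤ n)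
    (hsub : ∀ A ∈ C, A ⊆ Finset.Icc 1 n)
    (hcov : ∀ B : Finset ℕ, B ⊆ Finset.Icc 1 n → B.card = m + 1 →
      B ∈ C ∨ (∀ A ⊆ B, A.card = m → A ∈ C) ∨
      (∀ D, B ⊆ D → D ⊆ Finset.Icc 1 n → D.card = m + 2 → D ∈ C)) :
    IsCutsetIn n C := by
  refine ⟨hsub, fun c hc => ?_⟩
  have hB : c (m+1) ⊆ Finset.Icc 1 n := chain_subset_top hc (by omega)
  have hBcard : (c (m+1)).card = m + 1 := hc.1 _ (by omega)
  rcases hcov _ hB hBcard with h | h | h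
  · exact ⟨m+1, by omega, h⟩
  · refine ⟨m, by omega, h _ (hc.2.1 m (by omega)) (hc.1 _ (by omega))⟩
  · refine ⟨m+2, by omega, h _ (hc.2.1 (m+1) (by omega)) (chain_subset_top hc (by omega))
      (hc.1 _ (by omega))⟩

/-- Filter of a union of three uniform families. -/
lemma filter_three {F G H : Finset (Finset ℕ)} {m : ℕ}
    (hF : ∀ A ∈ F, A.card = m) (hG : ∀ A ∈ G, A.card = m + 1) (hH : ∀ A ∈ H, A.card = m + 2) :
    ((F ∪ G ∪ H).filter fun A => A.card = m) = F ∧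
    ((F ∪ G ∪ H).filter fun A => A.card = m + 1) = G ∧
    ((F ∪ G ∪ H).filter fun A => A.card = m + 2) = H := by
  classical
  refine ⟨?_, ?_, ?_⟩ <;>
  · ext A
    simp only [mem_filter, mem_union]
    constructor
    · rintro ⟨(h | h) | h, hcard⟩ <;>
        first
          | exact h
          | (exfalso; (first | (have := hF _ h) | (have := hG _ h) | (have := hH _ h)); omega)
    · intro h
      refine ⟨by tauto, ?_⟩
      first | exact hF _ h | exact hG _ h | exact hH _ h



/-- the first `c` elements of `Fin n`. -/
def lowf (n c : ℕ) : Finset (Fin n) := {x : Fin n | (x : ℕ) < c}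

/-- `{n-2, n-4, …, n-2j}` inside `Fin n`. -/
def Tf (n j : ℕ) : Finset (Fin n) := {x : Fin n | ∃ i, i < j ∧ (x : ℕ) = n - 2*i - 2}

lemma mem_lowf {n c : ℕ} {x : Fin n} : x ∈ lowf n c ↔ (x : ℕ) < c := by
  simp [lowf]

lemma mem_Tf {n j : ℕ} {x : Fin n} : x ∈ Tf n j ↔ ∃ i, i < j ∧ (x : ℕ) = n - 2*i - 2 := by
  simp [Tf]

lemma card_lowf {n c : ℕ} (h : c ≤ n) : (lowf n c).card = c := by
  classical
  have : (lowf n c).card = (Finset.range c).card := by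
    refine Finset.card_bij (fun (x : Fin n) _ => (x : ℕ)) ?_ ?_ ?_
    · intro x hx; simp only [Finset.mem_range]; exact mem_lowf.1 hx
    · intro a ha b hb hab; exact Fin.ext hab
    · intro b hb
      rw [Finset.mem_range] at hb
      exact ⟨⟨b, lt_of_lt_of_le hb h⟩, mem_lowf.2 hb, rfl⟩
  rw [this, Finset.card_range]

lemma card_Tf {n j : ℕ} (h : 2*j + 1 ≤ n) : (Tf n j).card = j := by
  classical
  have : (Finset.range j).card = (Tf n j).card := by
    refine Finset.card_bij (fun (i : ℕ) (hi : i ∈ Finset.range j) =>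
      (⟨n - 2*i - 2, by rw [Finset.mem_range] at hi; omega⟩ : Fin n)) ?_ ?_ ?_
    · intro i hi; rw [Finset.mem_range] at hi; exact mem_Tf.2 ⟨i, hi, rfl⟩
    · intro a ha b hb hab
      rw [Finset.mem_range] at ha hb
      have hv := congrArg Fin.val hab
      simp only at hv
      omega
    · intro x hx
      obtain ⟨i, hi, hx⟩ := mem_Tf.1 hx
      exact ⟨i, Finset.mem_range.2 hi, Fin.ext hx.symm⟩
  rw [← this, Finset.card_range]

lemma Tf_inter_gt {n m j : ℕ} (hj : j < m) (hmn : 2*m + 2 ≤ n) :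
    ∀ x : Fin n, x ∈ Tf n m → ((n - 2*j - 2 < (x : ℕ)) ↔ x ∈ Tf n j) := by
  intro x hx
  obtain ⟨i, hi, hxv⟩ := mem_Tf.1 hx
  constructor
  · intro hgt
    refine mem_Tf.2 ⟨i, ?_, hxv⟩
    omega
  · intro hxj
    obtain ⟨i', hi', hxv'⟩ := mem_Tf.1 hxj
    omega

/-- The central binomial identity. -/
lemma sum_identity : ∀ m n : ℕ, 2*m + 2 ≤ n →
    (∑ j ∈ Finset.range m, Nat.choose (n-2*j-2) (m+1-j)) +
    (∑ j ∈ Finset.range m, Nat.choose (n-2*j-2) (m-1-j)) +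
    (∑ j ∈ Finset.range (m+1), Nat.choose (n-2*j-2) (m-j)) + (n - 2*m - 1)
      = Nat.choose n (m+1) := by
  intro m
  induction m with
  | zero =>
    intro n hn
    simp [Nat.choose_one_right]
    omega
  | succ m ih =>
    intro n hn
    have h2 : 2*m + 2 ≤ n - 2 := by omega
    have hih := ih (n-2) h2
    -- peel off j = 0 using sum_range_succ'
    simp only [Nat.add_sub_cancel]
    rw [Finset.sum_range_succ' (fun j => Nat.choose (n-2*j-2) (m+2-j)) m,
      Finset.sum_range_succ' (fun j => Nat.choose (n-2*j-2) (m-j)) m,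
      Finset.sum_range_succ' (fun j => Nat.choose (n-2*j-2) (m+1-j)) (m+1)]
    have e1 : ∀ j, Nat.choose (n-2*(j+1)-2) (m+2-(j+1)) = Nat.choose ((n-2)-2*j-2) (m+1-j) := by
      intro j; congr 1 <;> omega
    have e2 : ∀ j, Nat.choose (n-2*(j+1)-2) (m-(j+1)) = Nat.choose ((n-2)-2*j-2) (m-1-j) := by
      intro j; congr 1 <;> omega
    have e3 : ∀ j, Nat.choose (n-2*(j+1)-2) (m+1-(j+1)) = Nat.choose ((n-2)-2*j-2) (m-j) := by
      intro j; congr 1 <;> omega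
    simp only [e1, e2, e3]
    have hch : Nat.choose n (m+2) = Nat.choose (n-2) (m+2) + 2 * Nat.choose (n-2) (m+1)
        + Nat.choose (n-2) m := by
      have p1 : Nat.choose n (m+2) = Nat.choose (n-1) (m+1) + Nat.choose (n-1) (m+2) := by
        rw [← Nat.succ_sub_one n]
        cases n with
        | zero => omega
        | succ k => simp [Nat.succ_sub_one, Nat.choose_succ_succ' k (m+1)]
      have p2 : Nat.choose (n-1) (m+1) = Nat.choose (n-2) m + Nat.choose (n-2) (m+1) := by
        have : n - 1 = (n-2) + 1 := by omega
        rw [this, Nat.choose_succ_succ' (n-2) m]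
      have p3 : Nat.choose (n-1) (m+2) = Nat.choose (n-2) (m+1) + Nat.choose (n-2) (m+2) := by
        have : n - 1 = (n-2) + 1 := by omega
        rw [this, Nat.choose_succ_succ' (n-2) (m+1)]
      omega
    have hzero1 : Nat.choose (n-2*0-2) (m+2-0) = Nat.choose (n-2) (m+2) := by norm_num
    have hzero2 : Nat.choose (n-2*0-2) (m-0) = Nat.choose (n-2) m := by norm_num
    have hzero3 : Nat.choose (n-2*0-2) (m+1-0) = Nat.choose (n-2) (m+1) := by norm_num
    rw [hzero1, hzero2, hzero3, hch]
    have : n - 2*(m+1) - 1 = (n-2) - 2*m - 1 := by omega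
    rw [this]
    omega





/-- blocks: `T_j ∪ X` with `X` an `s`-subset of the lowest `c` elements. -/
def blk (n j c s : ℕ) : Finset (Finset (Fin n)) :=
  (Finset.powersetCard s (lowf n c)).image (fun X => Tf n j ∪ X)

def fam (n m q : ℕ) : Finset (Finset (Fin n)) :=
  (Finset.range m).biUnion (fun j => blk n j (n - 2*j - 2) (q - j))

lemma mem_blk {n j c s : ℕ} {B : Finset (Fin n)} :
    B ∈ blk n j c s ↔ ∃ X, X ⊆ lowf n c ∧ X.card = s ∧ B = Tf n j ∪ X := by
  simp only [blk, Finset.mem_image, Finset.mem_powersetCard]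
  constructor
  · rintro ⟨X, ⟨h1, h2⟩, rfl⟩; exact ⟨X, h1, h2, rfl⟩
  · rintro ⟨X, h1, h2, rfl⟩; exact ⟨X, ⟨h1, h2⟩, rfl⟩

lemma Tf_disj_lowf {n j c : ℕ} (hc : c + 2*j ≤ n) : Disjoint (Tf n j) (lowf n c) := by
  rw [Finset.disjoint_left]
  intro x hx hx'
  obtain ⟨i, hi, hv⟩ := mem_Tf.1 hx
  have := mem_lowf.1 hx'
  omega

lemma blk_card {n j c s : ℕ} (hc : c + 2*j + 2 ≤ n) :
    (blk n j c s).card = Nat.choose c s := by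
  classical
  rw [blk, Finset.card_image_of_injOn, Finset.card_powersetCard, card_lowf (by omega)]
  intro X hX Y hY hXY
  rw [Finset.mem_coe, Finset.mem_powersetCard] at hX hY
  have dX : Disjoint (Tf n j) X := (Tf_disj_lowf (by omega)).mono_right hX.1
  have dY : Disjoint (Tf n j) Y := (Tf_disj_lowf (by omega)).mono_right hY.1
  have := congrArg (fun (S : Finset (Fin n)) => S \ Tf n j) hXY
  simpa [Finset.union_sdiff_cancel_left dX, Finset.union_sdiff_cancel_left dY] using this

lemma blk_sized {n j c s : ℕ} (hc : c + 2*j + 2 ≤ n) {B : Finset (Fin n)}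
    (hB : B ∈ blk n j c s) : B.card = j + s := by
  obtain ⟨X, hX, hXc, rfl⟩ := mem_blk.1 hB
  rw [Finset.card_union_of_disjoint ((Tf_disj_lowf (by omega)).mono_right hX),
    card_Tf (by omega), hXc]

lemma notmem_of_blk {n j c s : ℕ} (hc : c ≤ n - 2*j - 2) (hn : 2*j + 2 ≤ n)
    {B : Finset (Fin n)} (hB : B ∈ blk n j c s) {x : Fin n} (hx : (x : ℕ) = n - 2*j - 2) :
    x ∉ B := by
  obtain ⟨X, hX, hXc, rfl⟩ := mem_blk.1 hB
  intro hmem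
  rcases Finset.mem_union.1 hmem with h | h
  · obtain ⟨i, hi, hv⟩ := mem_Tf.1 h; omega
  · have := mem_lowf.1 (hX h); omega

lemma fam_sized {n m q : ℕ} (hmn : 2*m + 2 ≤ n) (hq : m ≤ q) {B : Finset (Fin n)}
    (hB : B ∈ fam n m q) : B.card = q := by
  rw [fam, Finset.mem_biUnion] at hB
  obtain ⟨j, hj, hB⟩ := hB
  rw [Finset.mem_range] at hj
  rw [blk_sized (by omega) hB]
  omega

lemma fam_card {n m q : ℕ} (hmn : 2*m + 2 ≤ n) :
    (fam n m q).card = ∑ j ∈ Finset.range m, Nat.choose (n - 2*j - 2) (q - j) := by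
  classical
  rw [fam, Finset.card_biUnion]
  · exact Finset.sum_congr rfl fun j hj => blk_card
      (by rw [Finset.mem_range] at hj; omega)
  · have key : ∀ a b : ℕ, a < b → b < m →
        Disjoint (blk n a (n - 2*a - 2) (q - a)) (blk n b (n - 2*b - 2) (q - b)) := by
      intro a b h hb
      rw [Finset.disjoint_left]
      intro B hBa hBb
      have hx : (⟨n - 2*a - 2, by omega⟩ : Fin n) ∈ B := by
        obtain ⟨X, hX, hXc, rfl⟩ := mem_blk.1 hBb
        exact Finset.mem_union_left _ (mem_Tf.2 ⟨a, h, rfl⟩)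
      exact notmem_of_blk le_rfl (by omega) hBa rfl hx
    intro a ha b hb hab
    rw [Finset.mem_coe, Finset.mem_range] at ha hb
    rcases lt_or_gt_of_ne hab with h | h
    · exact key a b h hb
    · exact (key b a h ha).symm

/-- Block members are colex-smaller than suitable targets. -/
lemma blk_lt_target {n m q : ℕ} (hmn : 2*m + 2 ≤ n) {target B : Finset (Fin n)}
    (hT : Tf n m ⊆ target) (hlow : ∀ x ∈ target, x ∈ Tf n m ∨ (x : ℕ) ≤ n - 2*m - 2)
    {j : ℕ} (hj : j < m) (hB : B ∈ blk n j (n - 2*j - 2) (q - j)) :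
    toColex B < toColex target := by
  rw [Finset.Colex.lt_iff_exists_filter_lt]
  set w : Fin n := ⟨n - 2*j - 2, by omega⟩ with hw
  obtain ⟨X, hX, hXc, rfl⟩ := mem_blk.1 hB
  have hwT : w ∈ Tf n m := mem_Tf.2 ⟨j, hj, rfl⟩
  have hwB : w ∉ Tf n j ∪ X := notmem_of_blk le_rfl (by omega) (mem_blk.2 ⟨X, hX, hXc, rfl⟩) rfl
  refine ⟨w, Finset.mem_sdiff.2 ⟨hT hwT, hwB⟩, ?_⟩
  have h1 : {a ∈ Tf n j ∪ X | w < a} = Tf n j := by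
    ext x
    simp only [Finset.mem_filter, Finset.mem_union]
    constructor
    · rintro ⟨h | h, hgt⟩
      · exact h
      · exfalso; have := mem_lowf.1 (hX h)
        have : (x : ℕ) < n - 2*j - 2 := this
        rw [Fin.lt_def] at hgt
        simp only [hw] at hgt
        omega
    · intro h
      obtain ⟨i, hi, hv⟩ := mem_Tf.1 h
      refine ⟨Or.inl h, ?_⟩
      rw [Fin.lt_def]; simp only [hw]; omega
  have h2 : {a ∈ target | w < a} = Tf n j := by
    ext x
    simp only [Finset.mem_filter]
    constructor
    · rintro ⟨hmem, hgt⟩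
      rw [Fin.lt_def] at hgt; simp only [hw] at hgt
      rcases hlow x hmem with h | h
      · obtain ⟨i, hi, hv⟩ := mem_Tf.1 h
        exact mem_Tf.2 ⟨i, by omega, hv⟩
      · omega
    · intro h
      obtain ⟨i, hi, hv⟩ := mem_Tf.1 h
      refine ⟨hT (mem_Tf.2 ⟨i, by omega, hv⟩), ?_⟩
      rw [Fin.lt_def]; simp only [hw]; omega
  rw [h1, h2]







open Finset.Colex

lemma target_notmem_fam {n m q : ℕ} (hmn : 2*m + 2 ≤ n) {target : Finset (Fin n)}
    (hT : Tf n m ⊆ target) : target ∉ fam n m q := by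
  intro h
  rw [fam, Finset.mem_biUnion] at h
  obtain ⟨j, hj, hB⟩ := h
  rw [Finset.mem_range] at hj
  exact notmem_of_blk le_rfl (by omega) hB (x := ⟨n - 2*j - 2, by omega⟩) rfl
    (hT (mem_Tf.2 ⟨j, hj, rfl⟩))

/-- Lower bound for the size of an initial segment. -/
lemma initSeg_card_ge {n m q : ℕ} (hmn : 2*m + 2 ≤ n) (hq : m ≤ q) {target : Finset (Fin n)}
    (hT : Tf n m ⊆ target) (hlow : ∀ x ∈ target, x ∈ Tf n m ∨ (x : ℕ) ≤ n - 2*m - 2)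
    (hcard : target.card = q) :
    (∑ j ∈ Finset.range m, Nat.choose (n - 2*j - 2) (q - j)) + 1 ≤ (initSeg target).card := by
  classical
  have hsub : insert target (fam n m q) ⊆ initSeg target := by
    intro B hB
    rcases Finset.mem_insert.1 hB with rfl | hB
    · exact mem_initSeg_self
    · have hBc := fam_sized hmn hq hB
      rw [fam, Finset.mem_biUnion] at hB
      obtain ⟨j, hj, hB'⟩ := hB
      rw [Finset.mem_range] at hj
      exact mem_initSeg.2 ⟨by rw [hcard, hBc], (blk_lt_target hmn hT hlow hj hB').le⟩
  calc (∑ j ∈ Finset.range m, Nat.choose (n - 2*j - 2) (q - j)) + 1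
      = (fam n m q).card + 1 := by rw [fam_card hmn]
    _ = (insert target (fam n m q)).card := by
        rw [Finset.card_insert_of_notMem (target_notmem_fam hmn hT)]
    _ ≤ _ := Finset.card_le_card hsub

/-- Upper bound for the size of the initial segment generated by `Tf n m ∪ lowf n ℓ`. -/
lemma initSeg_card_le {n m ℓ : ℕ} (hmn : 2*m + 2 ≤ n) (hl1 : 1 ≤ ℓ) (hl : ℓ ≤ n - 2*m - 1) :
    (initSeg (Tf n m ∪ lowf n ℓ)).card ≤
      (∑ j ∈ Finset.range m, Nat.choose (n - 2*j - 2) ((m + ℓ) - j)) + 1 := by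
  classical
  set target : Finset (Fin n) := Tf n m ∪ lowf n ℓ with htarget
  have hdisj : Disjoint (Tf n m) (lowf n ℓ) := Tf_disj_lowf (by omega)
  have hcardt : target.card = m + ℓ := by
    rw [htarget, Finset.card_union_of_disjoint hdisj, card_Tf (by omega), card_lowf (by omega)]
  have hsub : initSeg target ⊆ insert target (fam n m (m + ℓ)) := by
    intro t ht
    obtain ⟨hc, hle⟩ := mem_initSeg.1 ht
    rcases eq_or_lt_of_le hle with heq | hlt
    · rw [Finset.mem_insert]
      left
      exact toColex_inj.1 heq
    rw [Finset.Colex.lt_iff_exists_filter_lt] at hlt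
    obtain ⟨w, hw, hfil⟩ := hlt
    obtain ⟨hwt, hwnt⟩ := Finset.mem_sdiff.1 hw
    rcases Finset.mem_union.1 hwt with hwT | hwL
    · -- w = n - 2i - 2
      obtain ⟨i, hi, hv⟩ := mem_Tf.1 hwT
      have claimA : {a ∈ target | w < a} = Tf n i := by
        ext x
        simp only [Finset.mem_filter]
        constructor
        · rintro ⟨hx, hgt⟩
          rw [Fin.lt_def, hv] at hgt
          rcases Finset.mem_union.1 hx with h | h
          · obtain ⟨i', hi', hv'⟩ := mem_Tf.1 h
            exact mem_Tf.2 ⟨i', by omega, hv'⟩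
          · have := mem_lowf.1 h; omega
        · intro h
          obtain ⟨i', hi', hv'⟩ := mem_Tf.1 h
          refine ⟨Finset.mem_union_left _ (mem_Tf.2 ⟨i', by omega, hv'⟩), ?_⟩
          rw [Fin.lt_def, hv]; omega
      have hfil' : {a ∈ t | w < a} = Tf n i := by rw [hfil, claimA]
      set X : Finset (Fin n) := t.filter (fun x => (x : ℕ) < n - 2*i - 2) with hX
      have hXlow : X ⊆ lowf n (n - 2*i - 2) := by
        intro x hx
        exact mem_lowf.2 (Finset.mem_filter.1 hx).2
      have hteq : t = Tf n i ∪ X := by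
        ext x
        constructor
        · intro hx
          rcases lt_trichotomy ((x : ℕ)) (n - 2*i - 2) with h | h | h
          · exact Finset.mem_union_right _ (Finset.mem_filter.2 ⟨hx, h⟩)
          · exfalso; apply hwnt
            have : x = w := Fin.ext (by rw [hv]; exact h)
            rwa [this] at hx
          · refine Finset.mem_union_left _ ?_
            rw [← hfil']
            exact Finset.mem_filter.2 ⟨hx, by rw [Fin.lt_def, hv]; omega⟩
        · intro hx
          rcases Finset.mem_union.1 hx with h | h
          · rw [← hfil'] at h
            exact (Finset.mem_filter.1 h).1
          · exact (Finset.mem_filter.1 h).1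
      have hXcard : X.card = (m + ℓ) - i := by
        have hdx : Disjoint (Tf n i) X :=
          (Tf_disj_lowf (by omega)).mono_right hXlow
        have := hc
        rw [hcardt, hteq, Finset.card_union_of_disjoint hdx, card_Tf (by omega)] at this
        omega
      rw [Finset.mem_insert]
      right
      rw [fam, Finset.mem_biUnion]
      exact ⟨i, Finset.mem_range.2 hi, mem_blk.2 ⟨X, hXlow, hXcard, hteq⟩⟩
    · -- w in the low part: impossible
      exfalso
      have hv : (w : ℕ) < ℓ := mem_lowf.1 hwL
      have h1 : t.filter (fun x => ¬ w < x) ⊆ lowf n (w : ℕ) := by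
        intro x hx
        obtain ⟨hxt, hxle⟩ := Finset.mem_filter.1 hx
        rw [not_lt] at hxle
        refine mem_lowf.2 ?_
        rcases eq_or_lt_of_le hxle with h | h
        · exact absurd (h ▸ hxt) hwnt
        · exact h
      have h2 : target.filter (fun x => ¬ w < x) = lowf n ((w : ℕ) + 1) := by
        ext x
        simp only [Finset.mem_filter, not_lt]
        constructor
        · rintro ⟨_, hxle⟩
          exact mem_lowf.2 (by have := (Fin.le_def).1 hxle; omega)
        · intro hx
          have hxv := mem_lowf.1 hx
          refine ⟨Finset.mem_union_right _ (mem_lowf.2 (by omega)), ?_⟩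
          rw [Fin.le_def]; omega
      have e1 := Finset.card_filter_add_card_filter_not (s := t)
        (p := fun x => w < x)
      have e2 := Finset.card_filter_add_card_filter_not (s := target)
        (p := fun x => w < x)
      rw [hfil] at e1
      rw [h2, card_lowf (by omega)] at e2
      have h3 : (t.filter (fun x => ¬ w < x)).card ≤ (w : ℕ) :=
        le_trans (Finset.card_le_card h1) (le_of_eq (card_lowf (by omega)))
      rw [hc] at hcardt
      omega
  calc (initSeg target).card ≤ (insert target (fam n m (m + ℓ))).card :=
        Finset.card_le_card hsub
    _ ≤ (fam n m (m + ℓ)).card + 1 := Finset.card_insert_le _ _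
    _ = _ := by rw [fam_card hmn]





open Finset.Colex
open scoped FinsetFamily

/-- Facts about the target `Tf n m ∪ lowf n ℓ` and its bottom element. -/
lemma target_facts {n m ℓ : ℕ} (hmn : 2*m + 2 ≤ n) (hl1 : 1 ≤ ℓ) (hl : ℓ ≤ n - 2*m - 1) :
    ∃ hne : (Tf n m ∪ lowf n ℓ).Nonempty,
      (Tf n m ∪ lowf n ℓ).card = m + ℓ ∧
      ((Tf n m ∪ lowf n ℓ).erase ((Tf n m ∪ lowf n ℓ).min' hne)).card = m + ℓ - 1 ∧
      Tf n m ⊆ (Tf n m ∪ lowf n ℓ).erase ((Tf n m ∪ lowf n ℓ).min' hne) ∧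
      (∀ x ∈ (Tf n m ∪ lowf n ℓ).erase ((Tf n m ∪ lowf n ℓ).min' hne),
        x ∈ Tf n m ∨ (x : ℕ) ≤ n - 2*m - 2) := by
  have hz : (⟨0, by omega⟩ : Fin n) ∈ Tf n m ∪ lowf n ℓ :=
    Finset.mem_union_right _ (mem_lowf.2 (by simp only [Fin.val_mk]; omega))
  have hne : (Tf n m ∪ lowf n ℓ).Nonempty := ⟨_, hz⟩
  have hmin : (Tf n m ∪ lowf n ℓ).min' hne = ⟨0, by omega⟩ := by
    refine le_antisymm (Finset.min'_le _ _ hz) (Finset.le_min' _ _ _ ?_)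
    intro y hy
    exact Fin.mk_le_of_le_val (Nat.zero_le _)
  have hcard : (Tf n m ∪ lowf n ℓ).card = m + ℓ := by
    rw [Finset.card_union_of_disjoint (Tf_disj_lowf (by omega)), card_Tf (by omega),
      card_lowf (by omega)]
  have h0T : (⟨0, by omega⟩ : Fin n) ∉ Tf n m := by
    intro h
    obtain ⟨i, hi, hv⟩ := mem_Tf.1 h
    simp only at hv
    omega
  refine ⟨hne, hcard, ?_, ?_, ?_⟩
  · rw [Finset.card_erase_of_mem (hmin ▸ hz), hcard]
  · rw [hmin]
    intro x hx
    exact Finset.mem_erase.2 ⟨fun he => h0T (he ▸ hx), Finset.mem_union_left _ hx⟩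
  · intro x hx
    rcases Finset.mem_union.1 (Finset.mem_of_mem_erase hx) with h | h
    · exact Or.inl h
    · exact Or.inr (by have := mem_lowf.1 h; omega)

/-- A family with small shadow is no larger than the corresponding extremal family. -/
lemma small_shadow_card_le {n m ℓ k : ℕ} (hmn : 2*m + 2 ≤ n) (hl1 : 1 ≤ ℓ)
    (hl : ℓ ≤ n - 2*m - 1) (hq : m ≤ m + ℓ - 1)
    (W : Finset (Finset (Fin n))) (hWs : (W : Set (Finset (Fin n))).Sized (m + ℓ))
    (hWsh : (∂ W).card ≤ k)
    (hk : k < (∑ j ∈ Finset.range m, Nat.choose (n - 2*j - 2) ((m + ℓ - 1) - j)) + 1) :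
    W.card ≤ ∑ j ∈ Finset.range m, Nat.choose (n - 2*j - 2) ((m + ℓ) - j) := by
  by_contra hcon
  push_neg at hcon
  obtain ⟨hne, hcard, hecard, heT, helow⟩ := target_facts hmn hl1 hl
  set s := Tf n m ∪ lowf n ℓ with hs
  have hinit : IsInitSeg (initSeg s) (m + ℓ) := hcard ▸ isInitSeg_initSeg
  have h1 : (initSeg s).card ≤ W.card := le_trans (initSeg_card_le hmn hl1 hl) hcon
  have hkk := kruskal_katona hWs h1 hinit
  rw [shadow_initSeg hne] at hkk
  have h2 := initSeg_card_ge hmn hq heT helow hecard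
  have := le_trans h2 (le_trans hkk hWsh)
  omega

/-- The main Kruskal-Katona numerical bound. -/
lemma kk_bound {n m k : ℕ} (hm : 1 ≤ m) (hmn : 2*m + 2 ≤ n)
    (W V : Finset (Finset (Fin n)))
    (hWs : (W : Set (Finset (Fin n))).Sized (m + 1))
    (hVs : (V : Set (Finset (Fin n))).Sized (n - m - 1))
    (hWsh : (∂ W).card ≤ k) (hVsh : (∂ V).card ≤ k)
    (hcov : Nat.choose n (m+1) ≤ W.card + V.card + k) :
    ∑ j ∈ Finset.range (m+1), Nat.choose (n - 2*j - 2) (m - j) ≤ k := by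
  by_contra hk
  push_neg at hk
  have hK1 : ∑ j ∈ Finset.range (m+1), Nat.choose (n - 2*j - 2) (m - j)
      = (∑ j ∈ Finset.range m, Nat.choose (n - 2*j - 2) (m - j)) + 1 := by
    rw [Finset.sum_range_succ]
    have : Nat.choose (n - 2*m - 2) (m - m) = 1 := by simp
    rw [this]
  -- the W side, ℓ = 1
  have hWle : W.card ≤ ∑ j ∈ Finset.range m, Nat.choose (n - 2*j - 2) ((m + 1) - j) := by
    refine small_shadow_card_le hmn le_rfl (by omega) (by omega) W hWs hWsh ?_
    have : ∀ j ∈ Finset.range m, Nat.choose (n - 2*j - 2) ((m + 1 - 1) - j)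
        = Nat.choose (n - 2*j - 2) (m - j) := by
      intro j hj; congr 1
    simp only [Finset.sum_congr rfl this]
    omega
  -- the V side, ℓ = n - 2m - 1
  have hVle : V.card ≤ ∑ j ∈ Finset.range m, Nat.choose (n - 2*j - 2) ((n - m - 1) - j) := by
    have hml : m + (n - 2*m - 1) = n - m - 1 := by omega
    refine le_trans (le_of_le_of_eq (small_shadow_card_le hmn (by omega) le_rfl (by omega) V
      (by rwa [hml]) hVsh ?_) rfl) (le_of_eq ?_)
    · -- shadow sum at level n - m - 2 equals K - 1
      have heq : ∀ j ∈ Finset.range m, Nat.choose (n - 2*j - 2) ((m + (n - 2*m - 1) - 1) - j)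
          = Nat.choose (n - 2*j - 2) (m - j) := by
        intro j hj
        rw [Finset.mem_range] at hj
        have h1 : (m + (n - 2*m - 1) - 1) - j = (n - 2*j - 2) - (m - j) := by omega
        rw [h1, Nat.choose_symm (by omega)]
      rw [Finset.sum_congr rfl heq]
      omega
    · exact Finset.sum_congr rfl (fun j hj => by rw [hml])
  -- combine with the identity
  have hsym : ∀ j ∈ Finset.range m, Nat.choose (n - 2*j - 2) ((n - m - 1) - j)
      = Nat.choose (n - 2*j - 2) (m - 1 - j) := by
    intro j hj
    rw [Finset.mem_range] at hj
    have h1 : (n - m - 1) - j = (n - 2*j - 2) - (m - 1 - j) := by omega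
    rw [h1, Nat.choose_symm (by omega)]
  rw [Finset.sum_congr rfl hsym] at hVle
  have hid := sum_identity m n hmn
  have he1 : ∀ j ∈ Finset.range m, Nat.choose (n - 2*j - 2) (m + 1 - j)
      = Nat.choose (n - 2*j - 2) ((m + 1) - j) := fun j hj => rfl
  rw [Finset.sum_congr rfl he1] at hid
  omega



def embN (n : ℕ) : Fin n ↪ ℕ :=
  ⟨fun i => (i : ℕ) + 1, fun a b h => by
    apply Fin.ext
    have : (a : ℕ) + 1 = (b : ℕ) + 1 := h
    omega⟩

def toN {n : ℕ} (t : Finset (Fin n)) : Finset ℕ := t.map (embN n)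

def fromN (n : ℕ) (s : Finset ℕ) : Finset (Fin n) := {x : Fin n | (x : ℕ) + 1 ∈ s}

lemma mem_toN {n : ℕ} {t : Finset (Fin n)} {a : ℕ} :
    a ∈ toN t ↔ ∃ i ∈ t, (i : ℕ) + 1 = a := by
  simp [toN, embN]
  exact Iff.rfl

lemma toN_card {n : ℕ} (t : Finset (Fin n)) : (toN t).card = t.card := Finset.card_map _

lemma toN_subset_Icc {n : ℕ} (t : Finset (Fin n)) : toN t ⊆ Finset.Icc 1 n := by
  intro a ha
  obtain ⟨i, _, rfl⟩ := mem_toN.1 ha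
  simp only [Finset.mem_Icc]
  exact ⟨by omega, by have := i.isLt; omega⟩

lemma toN_injective {n : ℕ} : Function.Injective (toN (n := n)) :=
  fun _ _ h => Finset.map_injective _ h

lemma toN_mono {n : ℕ} {t t' : Finset (Fin n)} (h : t ⊆ t') : toN t ⊆ toN t' :=
  Finset.map_subset_map.2 h

lemma toN_fromN {n : ℕ} {s : Finset ℕ} (hs : s ⊆ Finset.Icc 1 n) : toN (fromN n s) = s := by
  ext a
  rw [mem_toN]
  constructor
  · rintro ⟨i, hi, rfl⟩
    simpa [fromN] using hi
  · intro ha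
    have h1 := hs ha
    rw [Finset.mem_Icc] at h1
    refine ⟨⟨a - 1, by omega⟩, ?_, by simp only [Fin.val_mk]; omega⟩
    simp only [fromN, Finset.mem_filter, Finset.mem_univ, true_and]
    simpa [Nat.sub_add_cancel h1.1] using ha

lemma fromN_card {n : ℕ} {s : Finset ℕ} (hs : s ⊆ Finset.Icc 1 n) :
    (fromN n s).card = s.card := by
  conv_rhs => rw [← toN_fromN hs]
  rw [toN_card]

/-- The key lower bound: any uniform 3-level cutset has at least `K` sets on each level. -/
lemma lower_bound {n m k : ℕ} (hm : 1 ≤ m) (hmn : 2*m + 2 ≤ n) {C : Finset (Finset ℕ)}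
    (hC : IsCutsetIn n C) (hcards : ∀ A ∈ C, m ≤ A.card ∧ A.card ≤ m + 2)
    (hk : ∀ i : ℕ, m ≤ i → i ≤ m + 2 → (C.filter fun A => A.card = i).card = k) :
    ∑ j ∈ Finset.range (m+1), Nat.choose (n - 2*j - 2) (m - j) ≤ k := by
  classical
  set level : Finset (Finset ℕ) := (Finset.Icc 1 n).powersetCard (m+1) with hlevel
  set Wn : Finset (Finset ℕ) :=
    level.filter (fun B => ∀ A ⊆ B, A.card = m → A ∈ C) with hWn
  set Un : Finset (Finset ℕ) :=
    level.filter (fun B => B ∉ C ∧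
      ∀ D, B ⊆ D → D ⊆ Finset.Icc 1 n → D.card = m + 2 → D ∈ C) with hUn
  have hlevelcard : level.card = Nat.choose n (m+1) := by
    rw [hlevel, Finset.card_powersetCard, Nat.card_Icc]
    norm_num
  have hcover : level ⊆ (C.filter fun A => A.card = m+1) ∪ Wn ∪ Un := by
    intro B hB
    rw [hlevel, Finset.mem_powersetCard] at hB
    by_cases hBC : B ∈ C
    · exact Finset.mem_union_left _ (Finset.mem_union_left _
        (Finset.mem_filter.2 ⟨hBC, hB.2⟩))
    rcases cutset_structure (by omega) hC hcards B hB.1 hB.2 hBC with h | h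
    · exact Finset.mem_union_left _ (Finset.mem_union_right _
        (Finset.mem_filter.2 ⟨Finset.mem_powersetCard.2 hB, h⟩))
    · exact Finset.mem_union_right _
        (Finset.mem_filter.2 ⟨Finset.mem_powersetCard.2 hB, hBC, h⟩)
  -- move to Fin n
  set W0 : Finset (Finset (Fin n)) := Wn.image (fromN n) with hW0
  set V0 : Finset (Finset (Fin n)) :=
    Un.image (fun B => Finset.univ \ fromN n B) with hV0
  have hWnsub : ∀ B ∈ Wn, B ⊆ Finset.Icc 1 n ∧ B.card = m + 1 := by
    intro B hB
    have := (Finset.mem_filter.1 hB).1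
    rw [hlevel, Finset.mem_powersetCard] at this
    exact this
  have hUnsub : ∀ B ∈ Un, B ⊆ Finset.Icc 1 n ∧ B.card = m + 1 := by
    intro B hB
    have := (Finset.mem_filter.1 hB).1
    rw [hlevel, Finset.mem_powersetCard] at this
    exact this
  have hW0card : W0.card = Wn.card := by
    rw [hW0]
    apply Finset.card_image_of_injOn
    intro A hA B hB h
    rw [← toN_fromN (hWnsub A hA).1, ← toN_fromN (hWnsub B hB).1, h]
  have hV0card : V0.card = Un.card := by
    rw [hV0]
    apply Finset.card_image_of_injOn
    intro A hA B hB h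
    have h2 : fromN n A = fromN n B := by
      have := congrArg (fun (S : Finset (Fin n)) => Finset.univ \ S) h
      simpa [Finset.sdiff_sdiff_self_left] using this
    rw [← toN_fromN (hUnsub A hA).1, ← toN_fromN (hUnsub B hB).1, h2]
  have hW0sized : (W0 : Set (Finset (Fin n))).Sized (m + 1) := by
    intro A hA
    rw [hW0] at hA
    simp only [Finset.coe_image, Set.mem_image, Finset.mem_coe] at hA
    obtain ⟨B, hB, rfl⟩ := hA
    rw [fromN_card (hWnsub B hB).1, (hWnsub B hB).2]
  have hV0sized : (V0 : Set (Finset (Fin n))).Sized (n - m - 1) := by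
    intro A hA
    rw [hV0] at hA
    simp only [Finset.coe_image, Set.mem_image, Finset.mem_coe] at hA
    obtain ⟨B, hB, rfl⟩ := hA
    rw [Finset.card_sdiff_of_subset (Finset.subset_univ _), Finset.card_univ, Fintype.card_fin,
      fromN_card (hUnsub B hB).1, (hUnsub B hB).2]
    omega
  -- shadow of W0 injects into F
  have hWsh : (Finset.shadow W0).card ≤ k := by
    rw [← hk m le_rfl (by omega)]
    apply Finset.card_le_card_of_injOn toN
    · intro t ht
      rw [Finset.mem_coe, Finset.mem_shadow_iff_insert_mem] at ht
      obtain ⟨a, ha, hins⟩ := ht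
      rw [hW0, Finset.mem_image] at hins
      obtain ⟨B, hB, hBe⟩ := hins
      have hWprop := (Finset.mem_filter.1 hB).2
      have htsub : toN t ⊆ B := by
        rw [← toN_fromN (hWnsub B hB).1, hBe]
        exact toN_mono (Finset.subset_insert _ _)
      have htcard : (toN t).card = m := by
        rw [toN_card]
        have h5 : (insert a t).card = m + 1 := by
          rw [← hBe, fromN_card (hWnsub B hB).1, (hWnsub B hB).2]
        rw [Finset.card_insert_of_notMem ha] at h5
        omega
      exact Finset.mem_filter.2 ⟨hWprop (toN t) htsub htcard, htcard⟩
    · exact fun a _ b _ h => toN_injective h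
  -- shadow of V0 injects into H
  have hVsh : (Finset.shadow V0).card ≤ k := by
    rw [← hk (m+2) (by omega) le_rfl]
    apply Finset.card_le_card_of_injOn (fun t => toN (Finset.univ \ t))
    · intro t ht
      rw [Finset.mem_coe, Finset.mem_shadow_iff_insert_mem] at ht
      obtain ⟨a, ha, hins⟩ := ht
      rw [hV0, Finset.mem_image] at hins
      obtain ⟨B, hB, hBe⟩ := hins
      obtain ⟨hBnC, hBprop⟩ := (Finset.mem_filter.1 hB).2
      have hafrom : a ∉ fromN n B := by
        intro haf
        have h6 : a ∈ Finset.univ \ fromN n B := hBe ▸ Finset.mem_insert_self a t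
        exact (Finset.mem_sdiff.1 h6).2 haf
      have huniv : Finset.univ \ t = insert a (fromN n B) := by
        have h1 : Finset.univ \ insert a t = fromN n B := by
          rw [← hBe, Finset.sdiff_sdiff_self_left, Finset.univ_inter]
        rw [Finset.sdiff_insert] at h1
        have ha' : a ∈ Finset.univ \ t := Finset.mem_sdiff.2 ⟨Finset.mem_univ _, ha⟩
        rw [← h1, Finset.insert_erase ha']
      set D := toN (Finset.univ \ t) with hD
      have hDsub : B ⊆ D := by
        conv_lhs => rw [← toN_fromN (hUnsub B hB).1]
        apply toN_mono
        rw [huniv]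
        exact Finset.subset_insert _ _
      have hDIcc : D ⊆ Finset.Icc 1 n := toN_subset_Icc _
      have hDcard : D.card = m + 2 := by
        rw [hD, toN_card, huniv, Finset.card_insert_of_notMem hafrom,
          fromN_card (hUnsub B hB).1, (hUnsub B hB).2]
      exact Finset.mem_filter.2 ⟨hBprop D hDsub hDIcc hDcard, hDcard⟩
    · intro a ha b hb h
      have := toN_injective h
      have := congrArg (fun (S : Finset (Fin n)) => Finset.univ \ S) this
      simpa [Finset.sdiff_sdiff_self_left] using this
  -- covering cardinality
  have hcov : Nat.choose n (m+1) ≤ W0.card + V0.card + k := by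
    rw [hW0card, hV0card, ← hlevelcard, ← hk (m+1) (by omega) (by omega)]
    calc level.card ≤ ((C.filter fun A => A.card = m+1) ∪ Wn ∪ Un).card :=
          Finset.card_le_card hcover
      _ ≤ ((C.filter fun A => A.card = m+1) ∪ Wn).card + Un.card := Finset.card_union_le _ _
      _ ≤ (C.filter fun A => A.card = m+1).card + Wn.card + Un.card := by
          have := Finset.card_union_le (C.filter fun A => A.card = m+1) Wn
          omega
      _ = Wn.card + Un.card + (C.filter fun A => A.card = m+1).card := by ring
  exact kk_bound hm hmn W0 V0 hW0sized hV0sized hWsh hVsh hcov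



def TnJ (n j : ℕ) : Finset ℕ := (Finset.range j).image (fun i => n - 2*i - 1)
def blkN (n j c s : ℕ) : Finset (Finset ℕ) :=
  (Finset.powersetCard s (Finset.Icc 1 c)).image (fun X => TnJ n j ∪ X)
def famN (n r : ℕ) (c s : ℕ → ℕ) : Finset (Finset ℕ) :=
  (Finset.range r).biUnion (fun j => blkN n j (c j) (s j))

lemma mem_TnJ {n j x : ℕ} : x ∈ TnJ n j ↔ ∃ i, i < j ∧ x = n - 2*i - 1 := by
  simp only [TnJ, Finset.mem_image, Finset.mem_range]
  constructor
  · rintro ⟨i, hi, rfl⟩; exact ⟨i, hi, rfl⟩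
  · rintro ⟨i, hi, rfl⟩; exact ⟨i, hi, rfl⟩

lemma card_TnJ {n j : ℕ} (h : 2*j ≤ n) : (TnJ n j).card = j := by
  rw [TnJ, Finset.card_image_of_injOn, Finset.card_range]
  intro a ha b hb hab
  rw [Finset.mem_coe, Finset.mem_range] at ha hb
  have : n - 2*a - 1 = n - 2*b - 1 := hab
  omega

lemma TnJ_disj_Icc {n j c : ℕ} (hc : c + 2*j ≤ n) : Disjoint (TnJ n j) (Finset.Icc 1 c) := by
  rw [Finset.disjoint_left]
  intro x hx hx'
  obtain ⟨i, hi, rfl⟩ := mem_TnJ.1 hx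
  rw [Finset.mem_Icc] at hx'
  omega

lemma mem_blkN {n j c s : ℕ} {B : Finset ℕ} :
    B ∈ blkN n j c s ↔ ∃ X, X ⊆ Finset.Icc 1 c ∧ X.card = s ∧ B = TnJ n j ∪ X := by
  simp only [blkN, Finset.mem_image, Finset.mem_powersetCard]
  constructor
  · rintro ⟨X, ⟨h1, h2⟩, rfl⟩; exact ⟨X, h1, h2, rfl⟩
  · rintro ⟨X, h1, h2, rfl⟩; exact ⟨X, ⟨h1, h2⟩, rfl⟩

lemma blkN_card {n j c s : ℕ} (hc : c + 2*j ≤ n) :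
    (blkN n j c s).card = Nat.choose c s := by
  rw [blkN, Finset.card_image_of_injOn, Finset.card_powersetCard, Nat.card_Icc,
    Nat.add_sub_cancel]
  intro X hX Y hY hXY
  rw [Finset.mem_coe, Finset.mem_powersetCard] at hX hY
  have dX : Disjoint (TnJ n j) X := (TnJ_disj_Icc hc).mono_right hX.1
  have dY : Disjoint (TnJ n j) Y := (TnJ_disj_Icc hc).mono_right hY.1
  have := congrArg (fun (S : Finset ℕ) => S \ TnJ n j) hXY
  simpa [Finset.union_sdiff_cancel_left dX, Finset.union_sdiff_cancel_left dY] using this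

lemma blkN_sized {n j c s : ℕ} (hc : c + 2*j ≤ n) {B : Finset ℕ}
    (hB : B ∈ blkN n j c s) : B.card = j + s := by
  obtain ⟨X, hX, hXc, rfl⟩ := mem_blkN.1 hB
  rw [Finset.card_union_of_disjoint ((TnJ_disj_Icc hc).mono_right hX), card_TnJ (by omega), hXc]

lemma notmem_blkN {n j c s : ℕ} (hc : c ≤ n - 2*j - 2) (hn : 2*j + 2 ≤ n)
    {B : Finset ℕ} (hB : B ∈ blkN n j c s) : (n - 2*j - 1) ∉ B := by
  obtain ⟨X, hX, hXc, rfl⟩ := mem_blkN.1 hB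
  intro hmem
  rcases Finset.mem_union.1 hmem with h | h
  · obtain ⟨i, hi, hv⟩ := mem_TnJ.1 h; omega
  · have := Finset.mem_Icc.1 (hX h); omega

lemma famN_card {n r : ℕ} {c s : ℕ → ℕ} (hrn : 2*r + 2 ≤ n)
    (hcw : ∀ j, j < r → c j + 2*j + 1 ≤ n)
    (hc : ∀ j, j + 1 < r → c j ≤ n - 2*j - 2) :
    (famN n r c s).card = ∑ j ∈ Finset.range r, Nat.choose (c j) (s j) := by
  classical
  rw [famN, Finset.card_biUnion]
  · refine Finset.sum_congr rfl fun j hj => ?_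
    rw [Finset.mem_range] at hj
    exact blkN_card (by have := hcw j hj; omega)
  · have key : ∀ a b : ℕ, a < b → b < r →
        Disjoint (blkN n a (c a) (s a)) (blkN n b (c b) (s b)) := by
      intro a b h hb
      rw [Finset.disjoint_left]
      intro B hBa hBb
      have hx : (n - 2*a - 1) ∈ B := by
        obtain ⟨X, hX, hXc, rfl⟩ := mem_blkN.1 hBb
        exact Finset.mem_union_left _ (mem_TnJ.2 ⟨a, h, rfl⟩)
      exact notmem_blkN (hc a (by omega)) (by omega) hBa hx

    intro a ha b hb hab
    rw [Finset.mem_coe, Finset.mem_range] at ha hb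
    rcases lt_or_gt_of_ne hab with h | h
    · exact key a b h hb
    · exact (key b a h ha).symm

lemma famN_sized {n r q : ℕ} {c : ℕ → ℕ} (hrn : 2*r + 2 ≤ n)
    (hcw : ∀ j, j < r → c j + 2*j + 1 ≤ n) (hq : r ≤ q) {B : Finset ℕ}
    (hB : B ∈ famN n r c (fun j => q - j)) : B.card = q := by
  rw [famN, Finset.mem_biUnion] at hB
  obtain ⟨j, hj, hB⟩ := hB
  rw [Finset.mem_range] at hj
  rw [blkN_sized (by have := hcw j hj; omega) hB]
  omega

lemma famN_subset_Icc {n r : ℕ} {c s : ℕ → ℕ} (hrn : 2*r + 2 ≤ n)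
    (hcw : ∀ j, j < r → c j + 2*j + 1 ≤ n) {B : Finset ℕ}
    (hB : B ∈ famN n r c s) : B ⊆ Finset.Icc 1 n := by
  rw [famN, Finset.mem_biUnion] at hB
  obtain ⟨j, hj, hB⟩ := hB
  rw [Finset.mem_range] at hj
  obtain ⟨X, hX, hXc, rfl⟩ := mem_blkN.1 hB
  intro x hx
  rcases Finset.mem_union.1 hx with h | h
  · obtain ⟨i, hi, rfl⟩ := mem_TnJ.1 h
    rw [Finset.mem_Icc]
    omega
  · have := Finset.mem_Icc.1 (hX h)
    rw [Finset.mem_Icc]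
    have := hcw j hj
    omega

lemma famN_notmem_n {n r : ℕ} {c s : ℕ → ℕ} (hrn : 2*r + 2 ≤ n)
    (hc : ∀ j, j < r → c j ≤ n - 1) {B : Finset ℕ}
    (hB : B ∈ famN n r c s) : n ∉ B := by
  rw [famN, Finset.mem_biUnion] at hB
  obtain ⟨j, hj, hB⟩ := hB
  rw [Finset.mem_range] at hj
  obtain ⟨X, hX, hXc, rfl⟩ := mem_blkN.1 hB
  intro hx
  rcases Finset.mem_union.1 hx with h | h
  · obtain ⟨i, hi, hv⟩ := mem_TnJ.1 h; omega
  · have := Finset.mem_Icc.1 (hX h); have := hc j hj; omega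

/-- The key shadow property of the block families. -/
lemma famN_shadow {n r q : ℕ} {c : ℕ → ℕ} (hrn : 2*r + 2 ≤ n)
    (hcw : ∀ j, j < r → c j + 2*j + 1 ≤ n)
    (hge : ∀ j, j < r → n - 2*j - 3 ≤ c j)
    (hanti : ∀ i j, i ≤ j → j < r → c j ≤ c i)
    (hq : r ≤ q - 1) (hq1 : 1 ≤ q)
    {B A : Finset ℕ} (hB : B ∈ famN n r c (fun j => q - j)) (hAB : A ⊆ B)
    (hA : A.card = q - 1) : A ∈ famN n r c (fun j => q - 1 - j) := by
  classical
  rw [famN, Finset.mem_biUnion] at hB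
  obtain ⟨j, hj, hBj⟩ := hB
  rw [Finset.mem_range] at hj
  have hcj := hcw j hj
  have hBcard : B.card = q := by
    rw [blkN_sized (by omega) hBj]; omega
  obtain ⟨X, hX, hXc, hBeq⟩ := mem_blkN.1 hBj
  -- A = B \ {x} for a single x
  have hdiffcard : (B \ A).card = 1 := by
    rw [Finset.card_sdiff_of_subset hAB, hBcard, hA]; omega
  obtain ⟨x, hxeq⟩ := Finset.card_eq_one.1 hdiffcard
  have hAeq : A = B.erase x := by
    rw [Finset.erase_eq, ← hxeq]
    exact (Finset.sdiff_sdiff_eq_self hAB).symm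
  have hxB : x ∈ B := by
    have : x ∈ B \ A := hxeq ▸ Finset.mem_singleton_self x
    exact (Finset.mem_sdiff.1 this).1
  rw [famN, Finset.mem_biUnion]
  rcases Finset.mem_union.1 (hBeq ▸ hxB) with hxT | hxX
  · -- x = n - 2 i₀ - 1 : drop to block i₀
    obtain ⟨i₀, hi₀, hxv⟩ := mem_TnJ.1 hxT
    refine ⟨i₀, Finset.mem_range.2 (by omega), ?_⟩
    have hTsub : TnJ n i₀ ⊆ A := by
      intro y hy
      obtain ⟨i, hi, rfl⟩ := mem_TnJ.1 hy
      rw [hAeq, Finset.mem_erase]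
      constructor
      · omega
      · rw [hBeq]
        exact Finset.mem_union_left _ (mem_TnJ.2 ⟨i, by omega, rfl⟩)
    set Y := A \ TnJ n i₀ with hY
    have hAY : A = TnJ n i₀ ∪ Y := by
      rw [hY, Finset.union_sdiff_of_subset hTsub]
    have hYIcc : Y ⊆ Finset.Icc 1 (c i₀) := by
      intro y hy
      obtain ⟨hyA, hynT⟩ := Finset.mem_sdiff.1 hy
      have hyB : y ∈ B := hAB hyA
      rcases Finset.mem_union.1 (hBeq ▸ hyB) with h | h
      · obtain ⟨i, hi, rfl⟩ := mem_TnJ.1 h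
        have hii : i₀ < i := by
          by_contra hcon
          push_neg at hcon
          rcases Nat.eq_or_lt_of_le hcon with heq | hlt
          · rw [heq] at hyA
            have hxA : x ∈ A := by rw [hxv]; exact hyA
            rw [hAeq] at hxA
            exact Finset.notMem_erase x B hxA
          · exact hynT (mem_TnJ.2 ⟨i, hlt, rfl⟩)
        rw [Finset.mem_Icc]
        have := hge i₀ (by omega)
        omega
      · have := Finset.mem_Icc.1 (hX h)
        have := hanti i₀ j (by omega) hj
        rw [Finset.mem_Icc]
        omega
    have hYcard : Y.card = q - 1 - i₀ := by
      have hdisj : Disjoint (TnJ n i₀) Y := (TnJ_disj_Icc (by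
        have := hcw i₀ (by omega); have := hanti i₀ j (by omega) hj; omega)).mono_right hYIcc
      have := hA
      rw [hAY, Finset.card_union_of_disjoint hdisj, card_TnJ (by omega)] at this
      omega
    exact mem_blkN.2 ⟨Y, hYIcc, hYcard, hAY⟩
  · -- x ∈ X : stay in block j
    refine ⟨j, Finset.mem_range.2 hj, ?_⟩
    have hAeq2 : A = TnJ n j ∪ X.erase x := by
      rw [hAeq, hBeq, Finset.erase_union_distrib]
      congr 1
      apply Finset.erase_eq_of_notMem
      intro hcon
      obtain ⟨i, hi, hv⟩ := mem_TnJ.1 hcon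
      have := Finset.mem_Icc.1 (hX hxX)
      omega
    refine mem_blkN.2 ⟨X.erase x, (Finset.erase_subset _ _).trans hX, ?_, hAeq2⟩
    rw [Finset.card_erase_of_mem hxX, hXc]
    omega






section Construction
variable {n m : ℕ}

/-- The low-part bound function used for `F` and `W`. -/
def cbf (n m : ℕ) : ℕ → ℕ := fun j => if j + 1 < m then n - 2*j - 2 else n - 2*m + 1

lemma cbf_cw (hm : 1 ≤ m) (hmn : 2*m + 2 ≤ n) : ∀ j, j < m → cbf n m j + 2*j + 1 ≤ n := by
  intro j hj
  unfold cbf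
  split <;> omega

lemma cbf_cs (hmn : 2*m + 2 ≤ n) : ∀ j, j + 1 < m → cbf n m j ≤ n - 2*j - 2 := by
  intro j hj
  unfold cbf
  rw [if_pos hj]

lemma cbf_ge (hmn : 2*m + 2 ≤ n) : ∀ j, j < m → n - 2*j - 3 ≤ cbf n m j := by
  intro j hj
  unfold cbf
  split <;> omega

lemma cbf_anti (hmn : 2*m + 2 ≤ n) : ∀ i j, i ≤ j → j < m → cbf n m j ≤ cbf n m i := by
  intro i j hij hj
  unfold cbf
  split <;> split <;> omega

lemma cvf_cw (hmn : 2*m + 2 ≤ n) : ∀ j, j < m → (n - 2*j - 2) + 2*j + 1 ≤ n := by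
  intro j hj; omega

-- Numeric lemmas
lemma countF (hm : 1 ≤ m) (hmn : 2*m + 2 ≤ n) :
    ∑ j ∈ Finset.range m, Nat.choose (cbf n m j) (m - j)
      = ∑ j ∈ Finset.range (m+1), Nat.choose (n - 2*j - 2) (m - j) := by
  obtain ⟨m', rfl⟩ : ∃ m', m = m' + 1 := ⟨m - 1, by omega⟩
  rw [Finset.sum_range_succ, Finset.sum_range_succ (n := m' + 1), Finset.sum_range_succ (n := m')]
  have h1 : ∀ j ∈ Finset.range m', Nat.choose (cbf n (m'+1) j) (m' + 1 - j)
      = Nat.choose (n - 2*j - 2) (m' + 1 - j) := by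
    intro j hj
    rw [Finset.mem_range] at hj
    unfold cbf
    rw [if_pos (by omega)]
  rw [Finset.sum_congr rfl h1]
  have h2 : cbf n (m'+1) m' = n - 2*(m'+1) + 1 := by unfold cbf; rw [if_neg (by omega)]
  rw [h2]
  have h3 : Nat.choose (n - 2*(m'+1) + 1) (m'+1-m') = n - 2*(m'+1) + 1 := by
    have : m' + 1 - m' = 1 := by omega
    rw [this, Nat.choose_one_right]
  have h4 : m' + 1 - m' = 1 := by omega
  have h5 : m' + 1 - (m' + 1) = 0 := by omega
  rw [h3, h4, h5, Nat.choose_one_right, Nat.choose_zero_right]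
  omega

lemma countW (hm : 1 ≤ m) (hmn : 2*m + 2 ≤ n) :
    ∑ j ∈ Finset.range m, Nat.choose (cbf n m j) (m + 1 - j)
      = (∑ j ∈ Finset.range m, Nat.choose (n - 2*j - 2) (m + 1 - j)) + (n - 2*m) := by
  obtain ⟨m', rfl⟩ : ∃ m', m = m' + 1 := ⟨m - 1, by omega⟩
  rw [Finset.sum_range_succ, Finset.sum_range_succ (n := m')]
  have h1 : ∀ j ∈ Finset.range m', Nat.choose (cbf n (m'+1) j) (m' + 1 + 1 - j)
      = Nat.choose (n - 2*j - 2) (m' + 1 + 1 - j) := by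
    intro j hj
    rw [Finset.mem_range] at hj
    unfold cbf
    rw [if_pos (by omega)]
  rw [Finset.sum_congr rfl h1]
  have h2 : cbf n (m'+1) m' = n - 2*(m'+1) + 1 := by unfold cbf; rw [if_neg (by omega)]
  rw [h2]
  have h4 : m' + 1 + 1 - m' = 2 := by omega
  rw [h4]
  -- C(a+1, 2) = C(a, 2) + a  with a = n - 2(m'+1)
  have h5 := Nat.choose_succ_succ (n - 2*(m'+1)) 1
  rw [Nat.choose_one_right] at h5
  norm_num at h5
  have h6 : Nat.choose (n - 2*m' - 2) 2 = Nat.choose (n - 2*(m'+1)) 2 := by congr 1 <;> omega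
  omega

lemma countV (hmn : 2*m + 2 ≤ n) :
    ∑ j ∈ Finset.range m, Nat.choose (n - 2*j - 2) (n - m - 1 - j)
      = ∑ j ∈ Finset.range m, Nat.choose (n - 2*j - 2) (m - 1 - j) := by
  refine Finset.sum_congr rfl fun j hj => ?_
  rw [Finset.mem_range] at hj
  have h1 : (n - m - 1) - j = (n - 2*j - 2) - (m - 1 - j) := by omega
  rw [h1, Nat.choose_symm (by omega)]

lemma countHc (hmn : 2*m + 2 ≤ n) :
    (∑ j ∈ Finset.range m, Nat.choose (n - 2*j - 2) (n - m - 2 - j)) + 1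
      = ∑ j ∈ Finset.range (m+1), Nat.choose (n - 2*j - 2) (m - j) := by
  rw [Finset.sum_range_succ]
  have h0 : Nat.choose (n - 2*m - 2) (m - m) = 1 := by simp
  rw [h0]
  have h1 : ∀ j ∈ Finset.range m, Nat.choose (n - 2*j - 2) (n - m - 2 - j)
      = Nat.choose (n - 2*j - 2) (m - j) := by
    intro j hj
    rw [Finset.mem_range] at hj
    have : (n - m - 2) - j = (n - 2*j - 2) - (m - j) := by omega
    rw [this, Nat.choose_symm (by omega)]
  rw [Finset.sum_congr rfl h1]

/-- The construction of an optimal uniform cutset, `m ≥ 1`. -/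
lemma construction (hm : 1 ≤ m) (hmn : 2*m + 2 ≤ n) :
    ∃ C : Finset (Finset ℕ), IsCutsetIn n C ∧ (∀ A ∈ C, m ≤ A.card ∧ A.card ≤ m + 2) ∧
      ∀ i, m ≤ i → i ≤ m + 2 → (C.filter fun A => A.card = i).card
        = ∑ j ∈ Finset.range (m+1), Nat.choose (n - 2*j - 2) (m - j) := by
  classical
  set K := ∑ j ∈ Finset.range (m+1), Nat.choose (n - 2*j - 2) (m - j) with hK
  set cb := cbf n m with hcb
  set cv : ℕ → ℕ := fun j => n - 2*j - 2 with hcv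
  have hcbw := cbf_cw hm hmn
  have hcbs := cbf_cs (n := n) hmn
  have hcvw := cvf_cw (n := n) (m := m) hmn
  set F := famN n m cb (fun j => m - j) with hF
  set W := famN n m cb (fun j => m + 1 - j) with hW
  set V := famN n m cv (fun j => n - m - 1 - j) with hV
  set Hc := famN n m cv (fun j => n - m - 2 - j) with hHc
  set U := V.image (fun B => Finset.Icc 1 n \ B) with hU
  set Him := Hc.image (fun B => Finset.Icc 1 n \ B) with hHim
  set Hfull := insert (Finset.Icc 1 (m+2)) Him with hHfull
  set level := (Finset.Icc 1 n).powersetCard (m+1) with hlevel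
  -- a member of W
  have hWmem : TnJ n (m-1) ∪ Finset.Icc 1 2 ∈ W := by
    rw [hW, famN, Finset.mem_biUnion]
    refine ⟨m-1, Finset.mem_range.2 (by omega), mem_blkN.2 ⟨Finset.Icc 1 2, ?_, ?_, rfl⟩⟩
    · apply Finset.Icc_subset_Icc le_rfl
      rw [hcb]
      unfold cbf
      rw [if_neg (by omega)]
      omega
    · rw [Nat.card_Icc]; omega
  set w₀ := TnJ n (m-1) ∪ Finset.Icc 1 2 with hw₀
  set W' := W.erase w₀ with hW'
  set G := level \ (W' ∪ U) with hG
  set C := F ∪ G ∪ Hfull with hC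
  -- subset facts
  have hVsub : ∀ B ∈ V, B ⊆ Finset.Icc 1 n := fun B hB => famN_subset_Icc hmn hcvw hB
  have hHcsub : ∀ B ∈ Hc, B ⊆ Finset.Icc 1 n := fun B hB => famN_subset_Icc hmn hcvw hB
  have hWsub : ∀ B ∈ W, B ⊆ Finset.Icc 1 n := fun B hB => famN_subset_Icc hmn hcbw hB
  have hFsub : ∀ B ∈ F, B ⊆ Finset.Icc 1 n := fun B hB => famN_subset_Icc hmn hcbw hB
  -- sized facts
  have hFsz : ∀ B ∈ F, B.card = m := fun B hB => famN_sized hmn hcbw le_rfl hB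
  have hWsz : ∀ B ∈ W, B.card = m + 1 := fun B hB => famN_sized hmn hcbw (by omega) hB
  have hVsz : ∀ B ∈ V, B.card = n - m - 1 := fun B hB => famN_sized hmn hcvw (by omega) hB
  have hHcsz : ∀ B ∈ Hc, B.card = n - m - 2 := fun B hB => famN_sized hmn hcvw (by omega) hB
  have hUsz : ∀ B ∈ U, B.card = m + 1 := by
    intro B hB
    rw [hU, Finset.mem_image] at hB
    obtain ⟨B', hB', rfl⟩ := hB
    rw [Finset.card_sdiff_of_subset (hVsub B' hB'), Nat.card_Icc, hVsz B' hB']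
    omega
  have hUsub : ∀ B ∈ U, B ⊆ Finset.Icc 1 n := by
    intro B hB
    rw [hU, Finset.mem_image] at hB
    obtain ⟨B', hB', rfl⟩ := hB
    exact Finset.sdiff_subset
  have hHimsz : ∀ B ∈ Him, B.card = m + 2 := by
    intro B hB
    rw [hHim, Finset.mem_image] at hB
    obtain ⟨B', hB', rfl⟩ := hB
    rw [Finset.card_sdiff_of_subset (hHcsub B' hB'), Nat.card_Icc, hHcsz B' hB']
    omega
  have hHsz : ∀ B ∈ Hfull, B.card = m + 2 := by
    intro B hB
    rcases Finset.mem_insert.1 hB with rfl | hB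
    · rw [Nat.card_Icc]; omega
    · exact hHimsz B hB
  have hHsub : ∀ B ∈ Hfull, B ⊆ Finset.Icc 1 n := by
    intro B hB
    rcases Finset.mem_insert.1 hB with rfl | hB
    · exact Finset.Icc_subset_Icc le_rfl (by omega)
    · rw [hHim, Finset.mem_image] at hB
      obtain ⟨B', hB', rfl⟩ := hB
      exact Finset.sdiff_subset
  have hGsub : ∀ B ∈ G, B ⊆ Finset.Icc 1 n ∧ B.card = m + 1 := by
    intro B hB
    have := Finset.mem_sdiff.1 hB
    rw [hlevel, Finset.mem_powersetCard] at this
    exact this.1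
  -- n-membership: W-sets avoid n, U-sets contain n
  have hWn : ∀ B ∈ W, n ∉ B := by
    intro B hB
    refine famN_notmem_n hmn ?_ hB
    intro j hj
    show cbf n m j ≤ n - 1
    have := hcbw j hj
    omega
  have hUn : ∀ B ∈ U, n ∈ B := by
    intro B hB
    rw [hU, Finset.mem_image] at hB
    obtain ⟨B', hB', rfl⟩ := hB
    refine Finset.mem_sdiff.2 ⟨Finset.mem_Icc.2 ⟨by omega, le_rfl⟩, ?_⟩
    refine famN_notmem_n hmn ?_ hB'
    intro j hj
    show n - 2*j - 2 ≤ n - 1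
    omega
  have hWU : Disjoint W' U := by
    rw [Finset.disjoint_left]
    intro B hB hB'
    exact hWn B (Finset.mem_of_mem_erase hB) (hUn B hB')
  -- cards
  have hsdiff_inj : ∀ (S : Finset (Finset ℕ)), (∀ B ∈ S, B ⊆ Finset.Icc 1 n) →
      (S.image (fun B => Finset.Icc 1 n \ B)).card = S.card := by
    intro S hS
    apply Finset.card_image_of_injOn
    intro A hA B hB h
    have := congrArg (fun (T : Finset ℕ) => Finset.Icc 1 n \ T) h
    simpa [Finset.sdiff_sdiff_eq_self (hS A hA), Finset.sdiff_sdiff_eq_self (hS B hB)] using this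
  have hFcard : F.card = K := by
    rw [hF, famN_card hmn hcbw hcbs, hK]
    exact countF hm hmn
  have hWcard : W.card = (∑ j ∈ Finset.range m, Nat.choose (n - 2*j - 2) (m + 1 - j))
      + (n - 2*m) := by
    rw [hW, famN_card hmn hcbw hcbs]
    exact countW hm hmn
  have hVcard : V.card = ∑ j ∈ Finset.range m, Nat.choose (n - 2*j - 2) (m - 1 - j) := by
    rw [hV, famN_card hmn hcvw (fun j hj => le_rfl)]
    exact countV hmn
  have hUcard : U.card = V.card := hsdiff_inj V hVsub
  have hHccard : Hc.card = K - 1 := by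
    rw [hHc, famN_card hmn hcvw (fun j hj => le_rfl), hK]
    have := countHc (n := n) (m := m) hmn
    omega
  have hKpos : 1 ≤ K := by
    rw [hK, Finset.sum_range_succ]
    have : Nat.choose (n - 2*m - 2) (m - m) = 1 := by simp
    omega
  have hHimcard : Him.card = K - 1 := by rw [hHim, hsdiff_inj Hc hHcsub, hHccard]
  have hIccnotHim : Finset.Icc 1 (m+2) ∉ Him := by
    intro h
    rw [hHim, Finset.mem_image] at h
    obtain ⟨B', hB', he⟩ := h
    have hn1 : n ∈ Finset.Icc 1 n \ B' := Finset.mem_sdiff.2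
      ⟨Finset.mem_Icc.2 ⟨by omega, le_rfl⟩,
        famN_notmem_n hmn (fun j hj => by show n - 2*j - 2 ≤ n - 1; omega) hB'⟩
    rw [he] at hn1
    have := Finset.mem_Icc.1 hn1
    omega
  have hHcard : Hfull.card = K := by
    rw [hHfull, Finset.card_insert_of_notMem hIccnotHim, hHimcard]
    omega
  have hW'card : W'.card = W.card - 1 := Finset.card_erase_of_mem hWmem
  have hlevelcard : level.card = Nat.choose n (m+1) := by
    rw [hlevel, Finset.card_powersetCard, Nat.card_Icc]
    norm_num
  have hWlevel : W' ∪ U ⊆ level := by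
    intro B hB
    rw [hlevel, Finset.mem_powersetCard]
    rcases Finset.mem_union.1 hB with h | h
    · exact ⟨hWsub B (Finset.mem_of_mem_erase h), hWsz B (Finset.mem_of_mem_erase h)⟩
    · exact ⟨hUsub B h, hUsz B h⟩
  have hGcard : G.card = K := by
    rw [hG, Finset.card_sdiff_of_subset hWlevel, Finset.card_union_of_disjoint hWU, hW'card,
      hlevelcard, hWcard, hUcard, hVcard]
    have hid := sum_identity m n hmn
    have hWpos : 1 ≤ (∑ j ∈ Finset.range m, Nat.choose (n - 2*j - 2) (m + 1 - j)) + (n - 2*m) := by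
      omega
    rw [hK]
    omega
  -- the covering property
  have hcov : ∀ B : Finset ℕ, B ⊆ Finset.Icc 1 n → B.card = m + 1 →
      B ∈ C ∨ (∀ A ⊆ B, A.card = m → A ∈ C) ∨
      (∀ D, B ⊆ D → D ⊆ Finset.Icc 1 n → D.card = m + 2 → D ∈ C) := by
    intro B hBsub hBcard
    have hBlevel : B ∈ level := by
      rw [hlevel, Finset.mem_powersetCard]; exact ⟨hBsub, hBcard⟩
    by_cases hBWU : B ∈ W' ∪ U
    · rcases Finset.mem_union.1 hBWU with hBW | hBU
      · refine Or.inr (Or.inl ?_)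
        intro A hA hAcard
        have hAF : A ∈ F := by
          have hsh := famN_shadow (q := m + 1) hmn hcbw (cbf_ge hmn) (cbf_anti hmn)
            (by omega) (by omega) (Finset.mem_of_mem_erase hBW) hA (by omega)
          exact hsh
        exact Finset.mem_union_left _ (Finset.mem_union_left _ hAF)
      · refine Or.inr (Or.inr ?_)
        intro D hBD hDsub hDcard
        rw [hU, Finset.mem_image] at hBU
        obtain ⟨V₁, hV₁, hBeq⟩ := hBU
        have hE : Finset.Icc 1 n \ D ⊆ V₁ := by
          rw [← Finset.sdiff_sdiff_eq_self (hVsub V₁ hV₁), hBeq]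
          exact Finset.sdiff_subset_sdiff Finset.Subset.rfl hBD
        have hEcard : (Finset.Icc 1 n \ D).card = n - m - 2 := by
          rw [Finset.card_sdiff_of_subset hDsub, Nat.card_Icc, hDcard]
          omega
        have hEHc : Finset.Icc 1 n \ D ∈ Hc := by
          have hsh := famN_shadow (q := n - m - 1) hmn hcvw
            (fun j hj => by omega) (fun i j hij hj => by omega)
            (by omega) (by omega) hV₁ hE (by omega)
          have hfe : (fun j => n - m - 1 - 1 - j) = (fun j => n - m - 2 - j) := by
            funext j; omega
          rw [hHc]
          rwa [hfe] at hsh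
        have hDH : D ∈ Him := by
          rw [hHim, Finset.mem_image]
          exact ⟨Finset.Icc 1 n \ D, hEHc, Finset.sdiff_sdiff_eq_self hDsub⟩
        exact Finset.mem_union_right _ (Finset.mem_insert_of_mem hDH)
    · left
      have hBG : B ∈ G := by rw [hG]; exact Finset.mem_sdiff.2 ⟨hBlevel, hBWU⟩
      exact Finset.mem_union_left _ (Finset.mem_union_right _ hBG)
  have hCsub : ∀ A ∈ C, A ⊆ Finset.Icc 1 n := by
    intro A hA
    rcases Finset.mem_union.1 hA with h | h
    · rcases Finset.mem_union.1 h with h | h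
      · exact hFsub A h
      · exact (hGsub A h).1
    · exact hHsub A h
  have hGsz : ∀ B ∈ G, B.card = m + 1 := fun B hB => (hGsub B hB).2
  obtain ⟨hf1, hf2, hf3⟩ := filter_three hFsz hGsz hHsz
  refine ⟨C, cutset_of_structure (by omega) hCsub hcov, ?_, ?_⟩
  · intro A hA
    rcases Finset.mem_union.1 hA with h | h
    · rcases Finset.mem_union.1 h with h | h
      · rw [hFsz A h]; omega
      · rw [hGsz A h]; omega
    · rw [hHsz A h]; omega
  · intro i hi1 hi2
    have : i = m ∨ i = m + 1 ∨ i = m + 2 := by omega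
    rcases this with rfl | rfl | rfl
    · rw [hC, hf1, hFcard]
    · rw [hC, hf2, hGcard]
    · rw [hC, hf3, hHcard]

end Construction


/-- The `m = 0` construction. -/
lemma construction_zero {n : ℕ} (hn : 2 ≤ n) :
    ∃ C : Finset (Finset ℕ), IsCutsetIn n C ∧ (∀ A ∈ C, 0 ≤ A.card ∧ A.card ≤ 2) ∧
      ∀ i, 0 ≤ i → i ≤ 2 → (C.filter fun A => A.card = i).card = 1 := by
  classical
  set C : Finset (Finset ℕ) := {(∅ : Finset ℕ)} ∪ {({1} : Finset ℕ)} ∪ {Finset.Icc 1 2} with hC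
  have hcards : ∀ A ∈ C, A.card = 0 ∨ A.card = 1 ∨ A.card = 2 := by
    intro A hA
    rw [hC] at hA
    rcases Finset.mem_union.1 hA with h | h
    · rcases Finset.mem_union.1 h with h | h <;> rw [Finset.mem_singleton.1 h] <;> simp
    · rw [Finset.mem_singleton.1 h]; right; right; rw [Nat.card_Icc]
  refine ⟨C, ⟨?_, ?_⟩, ?_, ?_⟩
  · intro A hA
    rw [hC] at hA
    rcases Finset.mem_union.1 hA with h | h
    · rcases Finset.mem_union.1 h with h | h <;> rw [Finset.mem_singleton.1 h]
      · exact Finset.empty_subset _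
      · intro x hx; rw [Finset.mem_singleton.1 hx]; rw [Finset.mem_Icc]; omega
    · rw [Finset.mem_singleton.1 h]; exact Finset.Icc_subset_Icc le_rfl hn
  · intro c hc
    refine ⟨0, by omega, ?_⟩
    have : (c 0).card = 0 := hc.1 0 (by omega)
    rw [Finset.card_eq_zero.1 this, hC]
    exact Finset.mem_union_left _ (Finset.mem_union_left _ (Finset.mem_singleton_self _))
  · intro A hA
    rcases hcards A hA with h | h | h <;> omega
  · have h0 := filter_three (F := {(∅ : Finset ℕ)}) (G := {({1} : Finset ℕ)})
      (H := {Finset.Icc 1 2}) (m := 0)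
      (by intro A hA; rw [Finset.mem_singleton.1 hA]; simp)
      (by intro A hA; rw [Finset.mem_singleton.1 hA]; simp)
      (by intro A hA; rw [Finset.mem_singleton.1 hA]; rw [Nat.card_Icc])
    intro i _ hi2
    have : i = 0 ∨ i = 1 ∨ i = 2 := by omega
    rcases this with rfl | rfl | rfl
    · rw [hC, h0.1]; simp
    · rw [hC, h0.2.1]; simp
    · rw [hC, h0.2.2]; simp

lemma lower_bound_zero {n k : ℕ} {C : Finset (Finset ℕ)}
    (hC : IsCutsetIn n C) (hcards : ∀ A ∈ C, 0 ≤ A.card ∧ A.card ≤ 2)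
    (hk : ∀ i : ℕ, 0 ≤ i → i ≤ 2 → (C.filter fun A => A.card = i).card = k) :
    1 ≤ k := by
  by_contra h
  push_neg at h
  interval_cases k
  have hempty : C = ∅ := by
    rw [← Finset.not_nonempty_iff_eq_empty]
    rintro ⟨A, hA⟩
    have h1 := (hcards A hA).2
    have h2 := hk A.card (by omega) h1
    rw [Finset.card_eq_zero] at h2
    have : A ∈ C.filter fun B => B.card = A.card := Finset.mem_filter.2 ⟨hA, rfl⟩
    rw [h2] at this
    exact absurd this (Finset.notMem_empty _)
  obtain ⟨c, hc⟩ := exists_maxChain n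
  obtain ⟨i, _, hi⟩ := hC.2 c hc
  rw [hempty] at hi
  exact absurd hi (Finset.notMem_empty _)



end GcutAux

open GcutAux in
theorem gcut_add_two (n m : ℕ) (hn : 2 ≤ n) (hmn : 2 * m + 2 ≤ n) :
    gcut n m (m + 2) = ∑ j ∈ Finset.range (m + 1), (n - 2 * j - 2).choose (m - j) := by
  classical
  set K := ∑ j ∈ Finset.range (m + 1), (n - 2 * j - 2).choose (m - j) with hK
  have hmem : K ∈ {k : ℕ | ∃ C : Finset (Finset ℕ), IsCutsetIn n C ∧
      (∀ A ∈ C, m ≤ A.card ∧ A.card ≤ m + 2) ∧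
      ∀ i : ℕ, m ≤ i → i ≤ m + 2 → (C.filter fun A => A.card = i).card = k} := by
    rcases Nat.eq_zero_or_pos m with rfl | hm
    · have hK1 : K = 1 := by rw [hK]; simp
      obtain ⟨C, h1, h2, h3⟩ := construction_zero hn
      exact ⟨C, h1, h2, by rw [hK1]; exact h3⟩
    · obtain ⟨C, h1, h2, h3⟩ := construction hm hmn
      exact ⟨C, h1, h2, h3⟩
  have hlb : ∀ k ∈ {k : ℕ | ∃ C : Finset (Finset ℕ), IsCutsetIn n C ∧
      (∀ A ∈ C, m ≤ A.card ∧ A.card ≤ m + 2) ∧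
      ∀ i : ℕ, m ≤ i → i ≤ m + 2 → (C.filter fun A => A.card = i).card = k}, K ≤ k := by
    rintro k ⟨C, h1, h2, h3⟩
    rcases Nat.eq_zero_or_pos m with rfl | hm
    · have hK1 : K = 1 := by rw [hK]; simp
      rw [hK1]
      exact lower_bound_zero h1 h2 h3
    · exact lower_bound hm hmn h1 h2 h3
  exact le_antisymm (Nat.sInf_le hmem) (le_csInf ⟨K, hmem⟩ hlb)
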